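/- Let G be a finite group and let 0 → A → B → C → 0 be a short exact sequence of ℤ[G]-modules that are finitely generated as abelian groups. Suppose that C is stably a permutation G-lattice and that for every subgroup H ≤ G the induced map on group cohomology H¹(H, A) → H¹(H, B) is injective. Then the short exact sequence splits as a sequence of ℤ[G]-modules. -/

import Mathlib

/-- `f : G → M` is a 1-cocycle for the action of `G` on `M`. -/
def IsOneCocycle {G M : Type} [Group G] [AddCommGroup M] [DistribMulAction G M]
    (f : G → M) : Prop :=
  ∀ g h : G, f (g * h) = f g + g • f h

/-- `f : G → M` is a 1-coboundary for the action of `G` on `M`. -/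
def IsOneCoboundary {G M : Type} [Group G] [AddCommGroup M] [DistribMulAction G M]
    (f : G → M) : Prop :=
  ∃ m : M, ∀ g : G, f g = g • m - m

/-- `C` is stably a permutation `G`-lattice: there are permutation `G`-lattices
(free `ℤ`-modules on finite `G`-sets `ι`, `ι'`) `P = ι →₀ ℤ` and `P' = ι' →₀ ℤ` together
with a `G`-equivariant isomorphism `C ⊕ P ≅ P'` of `ℤ[G]`-modules. -/
def IsStablyPermutation (G C : Type) [Group G] [AddCommGroup C] [DistribMulAction G C] :
    Prop :=
  ∃ (ι ι' : Type), Finite ι ∧ Finite ι' ∧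
    ∃ (σ : G →* Equiv.Perm ι) (σ' : G →* Equiv.Perm ι')
      (e : C × (ι →₀ ℤ) ≃+ (ι' →₀ ℤ)),
      ∀ (g : G) (c : C) (x : ι →₀ ℤ),
        e (g • c, Finsupp.equivMapDomain (σ g) x) = Finsupp.equivMapDomain (σ' g) (e (c, x))

/-- Let `G` be a finite group and `0 → A → B → C → 0` a short exact sequence of
`ℤ[G]`-modules which are finitely generated as abelian groups.  If `C` is stably a
permutation `G`-lattice and for every subgroup `H ≤ G` the induced map
`H¹(H, A) → H¹(H, B)` is injective (every 1-cocycle of `H` in `A` whose image in `B` is a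
coboundary is itself a coboundary), then the sequence splits as a sequence of
`ℤ[G]`-modules. -/
theorem splits_of_stablyPermutation_of_H1_injective
    {G A B C : Type} [Group G] [Finite G]
    [AddCommGroup A] [DistribMulAction G A] [Module.Finite ℤ A]
    [AddCommGroup B] [DistribMulAction G B] [Module.Finite ℤ B]
    [AddCommGroup C] [DistribMulAction G C] [Module.Finite ℤ C]
    (f : A →+ B) (p : B →+ C)
    (hfG : ∀ (g : G) (a : A), f (g • a) = g • f a)
    (hpG : ∀ (g : G) (b : B), p (g • b) = g • p b)
    (hfinj : Function.Injective f) (hpsurj : Function.Surjective p)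
    (hex : Function.Exact f p)
    (hC : IsStablyPermutation G C)
    (hH1 : ∀ (H : Subgroup G) (c : H → A), IsOneCocycle c →
      IsOneCoboundary (fun h : H => f (c h)) → IsOneCoboundary c) :
    ∃ s : C →+ B, (∀ (g : G) (c : C), s (g • c) = g • s c) ∧ ∀ c : C, p (s c) = c := by
  classical
  obtain ⟨ι, ι', _, _, σ, σ', e, he⟩ := hC
  -- the diagonal action on `B × (ι →₀ ℤ)`, as a family of additive monoid homs
  set ρ : G → (B × (ι →₀ ℤ)) →+ (B × (ι →₀ ℤ)) := fun g =>
    (DistribMulAction.toAddMonoidHom B g).prodMap (Finsupp.domCongr (σ g)).toAddMonoidHom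
    with hρdef
  have hρ : ∀ (g : G) (x : B × (ι →₀ ℤ)),
      ρ g x = (g • x.1, Finsupp.equivMapDomain (σ g) x.2) := fun g x => rfl
  have hρmul : ∀ (g h : G) (x : B × (ι →₀ ℤ)), ρ (g * h) x = ρ g (ρ h x) := by
    intro g h x
    simp only [hρ, mul_smul]
    congr 1
    rw [map_mul, Equiv.Perm.mul_def]
    exact Finsupp.equivMapDomain_trans (σ h) (σ g) x.2
  -- the projection `B × (ι →₀ ℤ) →+ (ι' →₀ ℤ)`
  set q : (B × (ι →₀ ℤ)) →+ (ι' →₀ ℤ) :=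
    e.toAddMonoidHom.comp (p.prodMap (AddMonoidHom.id (ι →₀ ℤ))) with hqdef
  have hq : ∀ x : B × (ι →₀ ℤ), q x = e (p x.1, x.2) := fun x => rfl
  -- equivariance of q
  have hqρ : ∀ (g : G) (x : B × (ι →₀ ℤ)),
      q (ρ g x) = Finsupp.equivMapDomain (σ' g) (q x) := by
    intro g x
    rw [hq, hρ, hq, ← he g (p x.1) x.2, hpG]
  -- kernel of q
  have hker : ∀ x : B × (ι →₀ ℤ), q x = 0 → ∃ a : A, (f a, (0 : ι →₀ ℤ)) = x := by
    intro x hx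
    rw [hq] at hx
    have h0 : (p x.1, x.2) = ((0 : C), (0 : ι →₀ ℤ)) := by
      apply e.injective
      simpa using hx
    have h1 : p x.1 = 0 := by rw [Prod.ext_iff] at h0; exact h0.1
    have h2 : x.2 = 0 := by rw [Prod.ext_iff] at h0; exact h0.2
    obtain ⟨a, ha⟩ := (hex x.1).mp h1
    exact ⟨a, by rw [ha, ← h2]⟩
  have hqf : ∀ a : A, q (f a, (0 : ι →₀ ℤ)) = 0 := by
    intro a
    rw [hq]
    have : p (f a) = 0 := (hex (f a)).mpr ⟨a, rfl⟩
    simp [this]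
  -- surjectivity of q
  have hqsurj : ∀ y : ι' →₀ ℤ, ∃ x, q x = y := by
    intro y
    obtain ⟨b, hb⟩ := hpsurj (e.symm y).1
    refine ⟨(b, (e.symm y).2), ?_⟩
    rw [hq, hb]
    simp
  -- key step: H-fixed lifts of basis vectors
  have key : ∀ i : ι', ∃ x : B × (ι →₀ ℤ), q x = Finsupp.single i 1 ∧
      ∀ g : G, σ' g i = i → ρ g x = x := by
    intro i
    obtain ⟨x₀, hx₀⟩ := hqsurj (Finsupp.single i 1)
    set H : Subgroup G :=
      { carrier := {g : G | σ' g i = i}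
        one_mem' := by simp
        mul_mem' := by
          intro a b ha hb
          simp only [Set.mem_setOf_eq, map_mul, Equiv.Perm.mul_apply] at *
          rw [hb, ha]
        inv_mem' := by
          intro a ha
          simp only [Set.mem_setOf_eq, map_inv] at *
          rw [Equiv.Perm.inv_def, Equiv.symm_apply_eq]
          exact ha.symm } with hHdef
    have hmem : ∀ h : H, σ' (h : G) i = i := fun h => h.2
    have hcob : ∀ h : H, ∃ a : A, (f a, (0 : ι →₀ ℤ)) = ρ (h : G) x₀ - x₀ := by
      intro h
      apply hker
      rw [map_sub, hqρ, hx₀, Finsupp.equivMapDomain_single, hmem h, sub_self]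
    choose a ha using hcob
    have hfa : ∀ h : H, f (a h) = ((h : G) • x₀.1) - x₀.1 := by
      intro h
      have := congrArg Prod.fst (ha h)
      simpa [hρ] using this
    have hcoc : IsOneCocycle a := by
      intro g h
      apply hfinj
      have e1 : (f (a (g * h)), (0 : ι →₀ ℤ)) = ρ ((g : G) * (h : G)) x₀ - x₀ := by
        rw [← Subgroup.coe_mul]; exact ha (g * h)
      have e2 : ρ ((g : G) * (h : G)) x₀ - x₀
          = ρ (g : G) (ρ (h : G) x₀ - x₀) + (ρ (g : G) x₀ - x₀) := by
        rw [hρmul, map_sub]; abel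
      rw [e2, ← ha h, ← ha g] at e1
      have e3 : ρ (g : G) (f (a h), (0 : ι →₀ ℤ)) = (f ((g : G) • a h), (0 : ι →₀ ℤ)) := by
        rw [hρ, hfG]
        simp
      rw [e3] at e1
      have e4 := congrArg Prod.fst e1
      simp only [Prod.fst_add] at e4
      rw [e4, map_add, Subgroup.smul_def]
      abel
    have hbd : IsOneCoboundary (fun h : H => f (a h)) := by
      refine ⟨x₀.1, fun h => ?_⟩
      show f (a h) = h • x₀.1 - x₀.1
      rw [hfa h, Subgroup.smul_def]
    obtain ⟨m, hm⟩ := hH1 H a hcoc hbd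
    refine ⟨x₀ - (f m, (0 : ι →₀ ℤ)), ?_, ?_⟩
    · rw [map_sub, hx₀, hqf, sub_zero]
    · intro g hg
      have hfm : f (a ⟨g, hg⟩) = f (g • m) - f m := by
        rw [hm ⟨g, hg⟩, Subgroup.smul_def, map_sub]
      have h1 : ρ g x₀ = x₀ + (f (a ⟨g, hg⟩), (0 : ι →₀ ℤ)) := by
        have := ha ⟨g, hg⟩
        rw [this]; abel
      have h2 : ρ g (f m, (0 : ι →₀ ℤ)) = (f (g • m), (0 : ι →₀ ℤ)) := by
        rw [hρ, hfG]; simp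
      rw [map_sub, h1, hfm, h2]
      have h3 : ((f (g • m) - f m, (0 : ι →₀ ℤ)) : B × (ι →₀ ℤ)) =
          (f (g • m), (0 : ι →₀ ℤ)) - (f m, (0 : ι →₀ ℤ)) := by
        simp
      rw [h3]
      abel
  -- orbit representatives
  letI st : Setoid ι' :=
    ⟨fun i j => ∃ g : G, σ' g j = i, by
      constructor
      · intro i; exact ⟨1, by simp⟩
      · rintro i j ⟨g, rfl⟩
        exact ⟨g⁻¹, by rw [map_inv]; exact Equiv.symm_apply_apply _ _⟩
      · rintro i j k ⟨g, rfl⟩ ⟨g', rfl⟩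
        exact ⟨g * g', by rw [map_mul]; rfl⟩⟩
  set r : ι' → ι' := fun i => (Quotient.mk st i).out with hrdef
  have hrorb : ∀ i, ∃ g : G, σ' g (r i) = i := by
    intro i
    obtain ⟨g, hg⟩ : r i ≈ i := Quotient.mk_out i
    exact ⟨g⁻¹, by rw [map_inv, ← hg]; exact Equiv.symm_apply_apply _ _⟩
  have hrinv : ∀ (g : G) (i : ι'), r (σ' g i) = r i := by
    intro g i
    have hmk : (Quotient.mk st (σ' g i)) = Quotient.mk st i := Quotient.sound ⟨g, rfl⟩
    show (Quotient.mk st (σ' g i)).out = (Quotient.mk st i).out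
    rw [hmk]
  choose w hw using hrorb
  choose X hX1 hX2 using key
  set b : ι' → B × (ι →₀ ℤ) := fun i => ρ (w i) (X (r i)) with hbdef
  have hb1 : ∀ i, q (b i) = Finsupp.single i 1 := by
    intro i
    show q (ρ (w i) (X (r i))) = _
    rw [hqρ, hX1, Finsupp.equivMapDomain_single, hw]
  have hb2 : ∀ (g : G) (i : ι'), ρ g (b i) = b (σ' g i) := by
    intro g i
    have hri : r (σ' g i) = r i := hrinv g i
    have hu : σ' ((w (σ' g i))⁻¹ * (g * w i)) (r i) = r i := by
      rw [map_mul, map_mul, map_inv]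
      show (σ' (w (σ' g i)))⁻¹ ((σ' g) ((σ' (w i)) (r i))) = r i
      rw [hw i, Equiv.Perm.inv_def, Equiv.symm_apply_eq]
      have := hw (σ' g i)
      rw [hri] at this
      exact this.symm
    show ρ g (ρ (w i) (X (r i))) = ρ (w (σ' g i)) (X (r (σ' g i)))
    rw [hri, ← hρmul]
    have hg' : g * w i = w (σ' g i) * ((w (σ' g i))⁻¹ * (g * w i)) := by group
    rw [hg', hρmul, hX2 _ _ hu]
  -- the section on the permutation module
  set s' : (ι' →₀ ℤ) →+ (B × (ι →₀ ℤ)) :=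
    Finsupp.liftAddHom (fun i => zmultiplesHom _ (b i)) with hs'def
  have hs'single : ∀ (i : ι') (n : ℤ), s' (Finsupp.single i n) = n • b i := by
    intro i n
    show Finsupp.liftAddHom (fun i => zmultiplesHom _ (b i)) (Finsupp.single i n) = n • b i
    rw [Finsupp.liftAddHom_apply_single]
    rfl
  have hqs' : ∀ y : ι' →₀ ℤ, q (s' y) = y := by
    intro y
    refine Finsupp.induction y (by simp) ?_
    intro i n y _ _ ih
    rw [map_add, map_add, hs'single, map_zsmul, hb1, ih, Finsupp.smul_single,
      smul_eq_mul, mul_one]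
  have hEadd : ∀ (g : G) (x y : ι' →₀ ℤ), Finsupp.equivMapDomain (σ' g) (x + y) =
      Finsupp.equivMapDomain (σ' g) x + Finsupp.equivMapDomain (σ' g) y := by
    intro g x y
    simpa using map_add (Finsupp.domCongr (σ' g)) x y
  have hs'ρ : ∀ (g : G) (y : ι' →₀ ℤ),
      s' (Finsupp.equivMapDomain (σ' g) y) = ρ g (s' y) := by
    intro g y
    refine Finsupp.induction y (by simp) ?_
    intro i n y _ _ ih
    rw [hEadd, map_add, map_add, ih, Finsupp.equivMapDomain_single, hs'single,
      hs'single, ← hb2, ← map_zsmul]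
    exact (map_add _ _ _).symm
  -- assembling the final section
  refine ⟨AddMonoidHom.mk' (fun c => (s' (e (c, (0 : ι →₀ ℤ)))).1) ?_, ?_, ?_⟩
  · intro c c'
    have h1 : e ((c + c' : C), (0 : ι →₀ ℤ)) = e (c, 0) + e (c', 0) := by
      rw [← map_add, Prod.mk_add_mk, add_zero]
    show (s' (e ((c + c' : C), (0 : ι →₀ ℤ)))).1 = _
    rw [h1, map_add]
    rfl
  · intro g c
    show (s' (e ((g • c : C), (0 : ι →₀ ℤ)))).1 = g • (s' (e (c, (0 : ι →₀ ℤ)))).1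
    have h1 : e ((g • c : C), (0 : ι →₀ ℤ)) = Finsupp.equivMapDomain (σ' g) (e (c, 0)) := by
      rw [← he g c 0, Finsupp.equivMapDomain_zero]
    rw [h1, hs'ρ, hρ]
  · intro c
    show p (s' (e (c, (0 : ι →₀ ℤ)))).1 = c
    have h1 := hqs' (e (c, (0 : ι →₀ ℤ)))
    rw [hq] at h1
    have h2 : ((p (s' (e (c, (0 : ι →₀ ℤ)))).1, (s' (e (c, (0 : ι →₀ ℤ)))).2) : C × (ι →₀ ℤ))
        = (c, (0 : ι →₀ ℤ)) := e.injective (by rw [h1])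
    rw [Prod.ext_iff] at h2
    exact h2.1
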